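/- Let $t_0 > 0$, $\gamma \in [0,1)$, $\beta \neq 1$, $K > 0$ and $A \geq 0$. Let $g : [t_0,\infty) \to [0,\infty)$ be a function such that $s \mapsto s^{-\beta} g(s)^{\gamma}$ is continuous, and suppose that for all $t \geq t_0$, $g(t) \leq A\sqrt{t} + \int_{t_0}^{t} K s^{-\beta} g(s)^{\gamma} \, ds$. Then for all $t \geq t_0$, $g(t) \leq 2^{1/(1-\gamma)} \left[ A\sqrt{t} + \left( \dfrac{1-\gamma}{1-\beta} K \left( t^{1-\beta} - t_0^{1-\beta} \right) \right)^{1/(1-\gamma)} \right]$. -/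

import Mathlib

open MeasureTheory intervalIntegral

/-- The deterministic Gronwall-type bound used to control the first moment of the
velocity process: if `g(t) ≤ A√t + ∫_{t0}^t K s^(-β) g(s)^γ ds`, then
`g(t) ≤ 2^(1/(1-γ)) [A√t + ((1-γ)/(1-β) K (t^(1-β) - t0^(1-β)))^(1/(1-γ))]`. -/
theorem moment_estimate_bound
    (t0 γ β K A : ℝ) (ht0 : 0 < t0) (hγ0 : 0 ≤ γ) (hγ1 : γ < 1)
    (hβ : β ≠ 1) (hK : 0 < K) (hA : 0 ≤ A)
    (g : ℝ → ℝ) (hg : ∀ t, t0 ≤ t → 0 ≤ g t)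
    (hcont : ContinuousOn (fun s => s ^ (-β) * g s ^ γ) (Set.Ici t0))
    (hineq : ∀ t, t0 ≤ t →
      g t ≤ A * Real.sqrt t + ∫ s in t0..t, K * s ^ (-β) * g s ^ γ) :
    ∀ t, t0 ≤ t →
      g t ≤ (2 : ℝ) ^ (1 / (1 - γ)) *
        (A * Real.sqrt t +
          ((1 - γ) / (1 - β) * K * (t ^ (1 - β) - t0 ^ (1 - β))) ^ (1 / (1 - γ))) := by
  intro T hT
  have h1γ : 0 < 1 - γ := by linarith
  set p : ℝ := 1 / (1 - γ) with hp_def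
  have hp : 0 < p := by positivity
  have hp1 : (1 - γ) * p = 1 := by
    rw [hp_def, mul_one_div_cancel h1γ.ne']
  set f : ℝ → ℝ := fun s => K * s ^ (-β) * g s ^ γ with hf_def
  have hfc : ContinuousOn f (Set.Ici t0) := by
    have h0 : ContinuousOn (fun s => K * (s ^ (-β) * g s ^ γ)) (Set.Ici t0) :=
      continuousOn_const.mul hcont
    simpa [hf_def, mul_assoc] using h0
  have hfnn : ∀ s, t0 ≤ s → 0 ≤ f s := by
    intro s hs
    have hs0 : (0 : ℝ) < s := lt_of_lt_of_le ht0 hs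
    have h1 : 0 < s ^ (-β) := Real.rpow_pos_of_pos hs0 _
    have h2 : 0 ≤ g s ^ γ := Real.rpow_nonneg (hg s hs) _
    exact mul_nonneg (mul_nonneg hK.le h1.le) h2
  set a : ℝ := A * Real.sqrt T with ha_def
  have ha : 0 ≤ a := mul_nonneg hA (Real.sqrt_nonneg _)
  set B : ℝ := (1 - γ) / (1 - β) * K * (T ^ (1 - β) - t0 ^ (1 - β)) with hB_def
  have hB : 0 ≤ B := by
    rcases lt_or_gt_of_ne hβ with hβ1 | hβ1
    · have h1 : t0 ^ (1 - β) ≤ T ^ (1 - β) :=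
        Real.rpow_le_rpow ht0.le hT (by linarith)
      have h2 : 0 ≤ (1 - γ) / (1 - β) * K :=
        mul_nonneg (div_nonneg h1γ.le (by linarith)) hK.le
      exact mul_nonneg h2 (by linarith)
    · have h1 : T ^ (1 - β) ≤ t0 ^ (1 - β) :=
        Real.rpow_le_rpow_of_nonpos ht0 hT (by linarith)
      have h2 : (1 - γ) / (1 - β) * K ≤ 0 :=
        mul_nonpos_of_nonpos_of_nonneg (div_nonpos_of_nonneg_of_nonpos h1γ.le (by linarith)) hK.le
      have h3 : T ^ (1 - β) - t0 ^ (1 - β) ≤ 0 := by linarith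
      nlinarith [mul_nonneg (neg_nonneg.mpr h2) (neg_nonneg.mpr h3)]
  -- integrability
  have hint : ∀ t, t0 ≤ t → IntervalIntegrable f volume t0 t := by
    intro t ht
    apply ContinuousOn.intervalIntegrable
    apply hfc.mono
    rw [Set.uIcc_of_le ht]
    exact Set.Icc_subset_Ici_self
  -- auxiliary function ψ
  set ψ : ℝ → ℝ := fun t => (1 - γ) / (1 - β) * K * (t ^ (1 - β) - t0 ^ (1 - β)) with hψ_def
  have hψT : ψ T = B := rfl
  have hψt0 : ψ t0 = 0 := by simp [hψ_def]
  have hψd : ∀ t, 0 < t → HasDerivAt ψ ((1 - γ) * K * t ^ (-β)) t := by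
    intro t ht
    have h1 : HasDerivAt (fun s : ℝ => s ^ (1 - β)) ((1 - β) * t ^ (1 - β - 1)) t :=
      Real.hasDerivAt_rpow_const (Or.inl ht.ne')
    have h2 := ((h1.sub_const (t0 ^ (1 - β))).const_mul ((1 - γ) / (1 - β) * K))
    have heq : (1 - γ) / (1 - β) * K * ((1 - β) * t ^ (1 - β - 1)) = (1 - γ) * K * t ^ (-β) := by
      have hb : (1 : ℝ) - β ≠ 0 := sub_ne_zero.mpr (Ne.symm hβ)
      have : (1 : ℝ) - β - 1 = -β := by ring
      rw [this]; field_simp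
    rw [heq] at h2
    exact h2
  have hψc : ContinuousOn ψ (Set.Icc t0 T) := by
    apply ContinuousOn.mul continuousOn_const
    apply ContinuousOn.sub _ continuousOn_const
    exact continuousOn_id.rpow_const fun x hx => Or.inl (lt_of_lt_of_le ht0 hx.1).ne'
  -- key estimate with ε
  have key : ∀ ε : ℝ, 0 < ε → g T ≤ ((a + ε) ^ (1 - γ) + B) ^ p := by
    intro ε hε
    set H : ℝ → ℝ := fun t => a + ε + ∫ s in t0..t, f s with hH_def
    have hHt0 : H t0 = a + ε := by simp [hH_def]
    have hHpos : ∀ t, t0 ≤ t → 0 < H t := by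
      intro t ht
      have h1 : 0 ≤ ∫ s in t0..t, f s :=
        intervalIntegral.integral_nonneg ht fun s hs => hfnn s hs.1
      have : 0 < a + ε := by linarith
      simp only [hH_def]; linarith
    have hgH : ∀ t, t0 ≤ t → t ≤ T → g t ≤ H t := by
      intro t ht htT
      have h1 := hineq t ht
      have h2 : A * Real.sqrt t ≤ a := by
        rw [ha_def]
        exact mul_le_mul_of_nonneg_left (Real.sqrt_le_sqrt htT) hA
      simp only [hH_def]
      calc g t ≤ A * Real.sqrt t + ∫ s in t0..t, K * s ^ (-β) * g s ^ γ := h1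
        _ ≤ a + ε + ∫ s in t0..t, f s := by
            simp only [hf_def]; linarith
    have hHc : ContinuousOn H (Set.Icc t0 T) := by
      apply continuousOn_const.add
      have hi : IntegrableOn f (Set.uIcc t0 T) volume := by
        apply ContinuousOn.integrableOn_compact isCompact_uIcc
        apply hfc.mono
        rw [Set.uIcc_of_le hT]
        exact Set.Icc_subset_Ici_self
      have := intervalIntegral.continuousOn_primitive_interval hi
      rwa [Set.uIcc_of_le hT] at this
    have hHd : ∀ t, t ∈ Set.Ioo t0 T → HasDerivAt H (f t) t := by
      intro t ht
      have hmem : Set.Ici t0 ∈ nhds t := Ici_mem_nhds ht.1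
      have hca : ContinuousAt f t := hfc.continuousAt hmem
      have hfIoi : ContinuousOn f (Set.Ioi t0) := hfc.mono Set.Ioi_subset_Ici_self
      have hmeas : StronglyMeasurableAtFilter f (nhds t) volume :=
        hfIoi.stronglyMeasurableAtFilter isOpen_Ioi t ht.1
      have := intervalIntegral.integral_hasDerivAt_right (hint t (le_of_lt ht.1)) hmeas hca
      exact this.const_add (a + ε)
    -- φ := H^(1-γ) - ψ is antitone on [t0, T]
    set φ : ℝ → ℝ := fun t => H t ^ (1 - γ) - ψ t with hφ_def
    have hφc : ContinuousOn φ (Set.Icc t0 T) := by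
      apply ContinuousOn.sub _ hψc
      exact hHc.rpow_const fun x hx => Or.inl (hHpos x hx.1).ne'
    have hφd : ∀ t, t ∈ Set.Ioo t0 T →
        HasDerivAt φ (f t * (1 - γ) * H t ^ (1 - γ - 1) - (1 - γ) * K * t ^ (-β)) t := by
      intro t ht
      exact ((hHd t ht).rpow_const (Or.inl (hHpos t ht.1.le).ne')).sub
        (hψd t (lt_trans ht0 ht.1))
    have hφ_nonpos : ∀ t, t ∈ Set.Ioo t0 T →
        f t * (1 - γ) * H t ^ (1 - γ - 1) - (1 - γ) * K * t ^ (-β) ≤ 0 := by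
      intro t ht
      have htpos : 0 < t := lt_trans ht0 ht.1
      have hHt : 0 < H t := hHpos t ht.1.le
      have htβ : 0 < t ^ (-β) := Real.rpow_pos_of_pos htpos _
      have hgγ : g t ^ γ ≤ H t ^ γ :=
        Real.rpow_le_rpow (hg t ht.1.le) (hgH t ht.1.le ht.2.le) hγ0
      have hcanc : H t ^ γ * H t ^ (1 - γ - 1) = 1 := by
        rw [← Real.rpow_add hHt]
        norm_num
      have hexp : 0 < H t ^ (1 - γ - 1) := Real.rpow_pos_of_pos hHt _
      have h1 : f t * (1 - γ) * H t ^ (1 - γ - 1)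
          = K * t ^ (-β) * (1 - γ) * (g t ^ γ * H t ^ (1 - γ - 1)) := by
        simp only [hf_def]; ring
      have h2 : g t ^ γ * H t ^ (1 - γ - 1) ≤ 1 := by
        calc g t ^ γ * H t ^ (1 - γ - 1) ≤ H t ^ γ * H t ^ (1 - γ - 1) :=
              mul_le_mul_of_nonneg_right hgγ hexp.le
          _ = 1 := hcanc
      rw [h1]
      have h3 : 0 ≤ K * t ^ (-β) * (1 - γ) := by positivity
      nlinarith
    have hanti : AntitoneOn φ (Set.Icc t0 T) := by
      apply antitoneOn_of_deriv_nonpos (convex_Icc _ _) hφc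
      · intro x hx
        rw [interior_Icc] at hx
        exact (hφd x hx).differentiableAt.differentiableWithinAt
      · intro x hx
        rw [interior_Icc] at hx
        rw [(hφd x hx).deriv]
        exact hφ_nonpos x hx
    have hφTt0 : φ T ≤ φ t0 :=
      hanti ⟨le_refl t0, hT⟩ ⟨hT, le_refl T⟩ hT
    have hHT : H T ^ (1 - γ) ≤ (a + ε) ^ (1 - γ) + B := by
      have : H T ^ (1 - γ) - ψ T ≤ H t0 ^ (1 - γ) - ψ t0 := hφTt0
      rw [hHt0, hψT, hψt0] at this
      linarith
    -- conclude
    have hHTpos : 0 < H T := hHpos T hT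
    have hid : (H T ^ (1 - γ)) ^ p = H T := by
      rw [← Real.rpow_mul hHTpos.le, hp1, Real.rpow_one]
    calc g T ≤ H T := hgH T hT (le_refl T)
      _ = (H T ^ (1 - γ)) ^ p := hid.symm
      _ ≤ ((a + ε) ^ (1 - γ) + B) ^ p :=
          Real.rpow_le_rpow (Real.rpow_nonneg hHTpos.le _) hHT hp.le
  -- pass to the limit ε → 0⁺
  have hgT : g T ≤ (a ^ (1 - γ) + B) ^ p := by
    have hct : ContinuousAt (fun ε : ℝ => ((a + ε) ^ (1 - γ) + B) ^ p) 0 := by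
      apply ContinuousAt.rpow_const _ (Or.inr hp.le)
      apply ContinuousAt.add _ continuousAt_const
      exact ((continuousAt_const.add continuousAt_id).rpow_const (Or.inr h1γ.le))
    have htend : Filter.Tendsto (fun ε : ℝ => ((a + ε) ^ (1 - γ) + B) ^ p)
        (nhdsWithin 0 (Set.Ioi 0)) (nhds ((a ^ (1 - γ) + B) ^ p)) := by
      have := hct.tendsto
      simp only [add_zero] at this
      exact this.mono_left nhdsWithin_le_nhds
    refine ge_of_tendsto htend ?_
    filter_upwards [self_mem_nhdsWithin] with ε hε
    exact key ε hε
  -- final algebraic estimate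
  have hfin : (a ^ (1 - γ) + B) ^ p ≤ (2 : ℝ) ^ p * (a + B ^ p) := by
    have haγ : 0 ≤ a ^ (1 - γ) := Real.rpow_nonneg ha _
    have hmaxnn : 0 ≤ max (a ^ (1 - γ)) B := le_max_of_le_right hB
    have h1 : a ^ (1 - γ) + B ≤ 2 * max (a ^ (1 - γ)) B := by
      have := le_max_left (a ^ (1 - γ)) B
      have := le_max_right (a ^ (1 - γ)) B
      linarith
    have h2 : (a ^ (1 - γ) + B) ^ p ≤ (2 * max (a ^ (1 - γ)) B) ^ p :=
      Real.rpow_le_rpow (by linarith) h1 hp.le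
    rw [Real.mul_rpow (by norm_num) hmaxnn] at h2
    have h3 : (max (a ^ (1 - γ)) B) ^ p ≤ a + B ^ p := by
      rcases max_cases (a ^ (1 - γ)) B with ⟨heq, _⟩ | ⟨heq, _⟩
      · rw [heq, ← Real.rpow_mul ha, hp1, Real.rpow_one]
        have : 0 ≤ B ^ p := Real.rpow_nonneg hB _
        linarith
      · rw [heq]
        linarith
    calc (a ^ (1 - γ) + B) ^ p ≤ (2 : ℝ) ^ p * (max (a ^ (1 - γ)) B) ^ p := h2
      _ ≤ (2 : ℝ) ^ p * (a + B ^ p) := by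
          have h2p : (0 : ℝ) ≤ (2 : ℝ) ^ p := Real.rpow_nonneg (by norm_num) _
          exact mul_le_mul_of_nonneg_left h3 h2p
  exact le_trans hgT hfin
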